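/- Let Y be any N×N complex matrix with [X₊, Y] = 0. Then for every t ∈ ℂ: exp(t X₊) · (X₋ + Y) · exp(−t X₊) = X₋ + Y + t·H − t²·X₊, where exp is the matrix exponential. -/

import Mathlib

open Matrix

/-- The diagonal matrix `H` with `H_{ii} = N + 1 - 2i` (1-indexed). -/
noncomputable def Hmat (N : ℕ) : Matrix (Fin N) (Fin N) ℂ :=
  Matrix.diagonal fun i => (N : ℂ) - 1 - 2 * (i : ℕ)

/-- The matrix `X₊` with `(X₊)_{i,i+1} = √(i (N - i))` (1-indexed) and all other entries `0`. -/
noncomputable def Xplus (N : ℕ) : Matrix (Fin N) (Fin N) ℂ :=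
  fun i j => if (j : ℕ) = (i : ℕ) + 1
    then (Real.sqrt (((i : ℕ) + 1) * (N - 1 - (i : ℕ))) : ℂ) else 0

/-- The matrix `X₋ = X₊ᵀ`. -/
noncomputable def Xminus (N : ℕ) : Matrix (Fin N) (Fin N) ℂ :=
  (Xplus N)ᵀ

namespace ExpConjAux

lemma sqrt_mul_self' (N : ℕ) (i : Fin N) :
    (Real.sqrt (((i : ℕ) + 1) * ((N : ℝ) - 1 - (i : ℕ)))) *
      (Real.sqrt (((i : ℕ) + 1) * ((N : ℝ) - 1 - (i : ℕ))))
      = ((i : ℕ) + 1) * ((N : ℝ) - 1 - (i : ℕ)) := by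
  apply Real.mul_self_sqrt
  have hi : ((i : ℕ) : ℝ) ≤ (N : ℝ) - 1 := by
    have := i.isLt
    have : ((i : ℕ) : ℝ) + 1 ≤ (N : ℝ) := by exact_mod_cast this
    linarith
  have h1 : (0 : ℝ) ≤ ((i : ℕ) : ℝ) + 1 := by positivity
  nlinarith

lemma P1 (N : ℕ) :
    Xplus N * Xminus N =
      Matrix.diagonal (fun i : Fin N => (((i : ℕ) : ℂ) + 1) * ((N : ℂ) - 1 - ((i : ℕ) : ℂ))) := by
  ext i j
  rw [Matrix.mul_apply]
  simp only [Xminus, Matrix.transpose_apply, Xplus]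
  by_cases h : (i : ℕ) + 1 < N
  · rw [Finset.sum_eq_single (⟨(i : ℕ) + 1, h⟩ : Fin N)]
    · by_cases hij : i = j
      · subst hij
        simp only [Matrix.diagonal_apply_eq, if_pos rfl, if_true]
        rw [← Complex.ofReal_mul, sqrt_mul_self' N i]
        push_cast
        ring
      · have hvj : ¬ ((⟨(i : ℕ) + 1, h⟩ : Fin N) : ℕ) = (j : ℕ) + 1 := by
          simp only [Fin.val_mk]
          intro hh
          apply hij
          apply Fin.ext
          omega
        rw [Matrix.diagonal_apply_ne _ hij]
        simp [hvj]
        exact fun hh => absurd (Fin.ext hh) hij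
    · intro k _ hk
      have : ¬ ((k : ℕ) = (i : ℕ) + 1) := by
        intro hh
        apply hk
        apply Fin.ext
        simpa using hh
      simp [this]
    · intro h'
      exact absurd (Finset.mem_univ _) h'
  · have hi : (i : ℕ) + 1 = N := by
      have := i.isLt; omega
    have hz : ∀ k : Fin N, ¬ ((k : ℕ) = (i : ℕ) + 1) := by
      intro k hk
      have := k.isLt; omega
    rw [Finset.sum_eq_zero (fun k _ => by simp [hz k])]
    by_cases hij : i = j
    · subst hij
      rw [Matrix.diagonal_apply_eq]
      have : ((i : ℕ) : ℂ) = (N : ℂ) - 1 := by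
        have : ((i : ℕ) : ℂ) + 1 = (N : ℂ) := by exact_mod_cast congrArg (Nat.cast : ℕ → ℂ) hi
        linear_combination this
      rw [this]
      ring
    · rw [Matrix.diagonal_apply_ne _ hij]

lemma P2 (N : ℕ) :
    Xminus N * Xplus N =
      Matrix.diagonal (fun i : Fin N => ((i : ℕ) : ℂ) * ((N : ℂ) - ((i : ℕ) : ℂ))) := by
  ext i j
  rw [Matrix.mul_apply]
  simp only [Xminus, Matrix.transpose_apply, Xplus]
  rcases Nat.eq_zero_or_pos (i : ℕ) with hi0 | hip
  · rw [Finset.sum_eq_zero (fun k _ => by simp [hi0])]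
    by_cases hij : i = j
    · subst hij
      rw [Matrix.diagonal_apply_eq, hi0]
      simp
    · rw [Matrix.diagonal_apply_ne _ hij]
  · obtain ⟨m, hm⟩ : ∃ m, (i : ℕ) = m + 1 := ⟨(i : ℕ) - 1, by omega⟩
    have hmN : m < N := by have := i.isLt; omega
    rw [Finset.sum_eq_single (⟨m, hmN⟩ : Fin N)]
    · simp only []
      have h1 : ((i : ℕ) = ((⟨m, hmN⟩ : Fin N) : ℕ) + 1) := by simp only [Fin.val_mk]; omega
      rw [if_pos h1]
      by_cases hij : i = j
      · subst hij
        rw [if_pos h1, Matrix.diagonal_apply_eq]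
        rw [← Complex.ofReal_mul, sqrt_mul_self' N ⟨m, hmN⟩]
        have : ((i : ℕ) : ℂ) = (m : ℂ) + 1 := by exact_mod_cast congrArg (Nat.cast : ℕ → ℂ) hm
        rw [this]
        push_cast
        ring
      · have h2 : ¬ ((j : ℕ) = ((⟨m, hmN⟩ : Fin N) : ℕ) + 1) := by
          simp only [Fin.val_mk] at *
          intro hh
          apply hij
          apply Fin.ext
          omega
        rw [if_neg h2, Matrix.diagonal_apply_ne _ hij]
        ring
    · intro k _ hk
      have : ¬ ((i : ℕ) = (k : ℕ) + 1) := by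
        intro hh
        apply hk
        apply Fin.ext
        simp only [Fin.val_mk]
        omega
      simp [this]
    · intro h'
      exact absurd (Finset.mem_univ _) h'

lemma comm1 (N : ℕ) : Xplus N * Xminus N - Xminus N * Xplus N = Hmat N := by
  rw [P1, P2, Hmat]
  ext i j
  simp only [Matrix.sub_apply, Matrix.diagonal_apply]
  split_ifs
  · ring
  · ring

lemma comm2 (N : ℕ) : Xplus N * Hmat N = Hmat N * Xplus N - (2 : ℂ) • Xplus N := by
  ext i j
  simp only [Hmat, Matrix.mul_diagonal, Matrix.diagonal_mul, Matrix.sub_apply,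
    Matrix.smul_apply, smul_eq_mul, Xplus]
  by_cases h : (j : ℕ) = (i : ℕ) + 1
  · rw [if_pos h]
    have : ((j : ℕ) : ℂ) = ((i : ℕ) : ℂ) + 1 := by exact_mod_cast congrArg (Nat.cast : ℕ → ℂ) h
    rw [this]
    ring
  · rw [if_neg h]
    ring

end ExpConjAux

set_option maxHeartbeats 2000000 in
/-- For any `Y` commuting with `X₊` and any `t ∈ ℂ`:
`exp(t X₊) (X₋ + Y) exp(-t X₊) = X₋ + Y + t H - t² X₊`. -/
theorem exp_conjugation (N : ℕ) (hN : 2 ≤ N)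
    (Y : Matrix (Fin N) (Fin N) ℂ) (hY : Xplus N * Y - Y * Xplus N = 0) (t : ℂ) :
    NormedSpace.exp (t • Xplus N) * (Xminus N + Y) *
        NormedSpace.exp ((-t) • Xplus N) =
      Xminus N + Y + t • Hmat N - (t ^ 2) • Xplus N := by
    classical
  letI : SeminormedRing (Matrix (Fin N) (Fin N) ℂ) := Matrix.linftyOpSemiNormedRing
  letI : NormedRing (Matrix (Fin N) (Fin N) ℂ) := Matrix.linftyOpNormedRing
  letI : NormedAlgebra ℂ (Matrix (Fin N) (Fin N) ℂ) := Matrix.linftyOpNormedAlgebra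
  letI : NormedAlgebra ℚ (Matrix (Fin N) (Fin N) ℂ) := Matrix.linftyOpNormedAlgebra
  set A := Xplus N with hA
  set Hm := Hmat N with hHm
  set B := Xminus N + Y with hB
  have hAY : A * Y = Y * A := sub_eq_zero.mp hY
  have hAB : A * B = B * A + Hm := by
    have h1 : A * Xminus N = Hm + Xminus N * A := eq_add_of_sub_eq (ExpConjAux.comm1 N)
    rw [hB, mul_add, add_mul, h1, hAY]
    abel
  have hAH : A * Hm = Hm * A - (2 : ℂ) • A := ExpConjAux.comm2 N
  -- the key power identity
  have hpow : ∀ n : ℕ, A ^ (n + 1) * B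
      = B * A ^ (n + 1) + ((n : ℂ) + 1) • (Hm * A ^ n)
        - (((n : ℂ) + 1) * (n : ℂ)) • A ^ n := by
    intro n
    induction n with
    | zero => simpa using hAB
    | succ n ih =>
      have e1 : A ^ (n + 1 + 1) * B = A * (A ^ (n + 1) * B) := by
        rw [← mul_assoc, ← pow_succ']
      rw [e1, ih]
      simp only [mul_add, mul_sub, mul_smul_comm]
      simp only [← mul_assoc]
      rw [hAB, hAH]
      simp only [add_mul, sub_mul, smul_mul_assoc, mul_assoc, ← pow_succ']
      match_scalars <;> push_cast <;> ring
  -- the exponential series coefficients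
  set c : ℕ → ℂ := fun n => ((Nat.factorial n : ℂ))⁻¹ * t ^ n with hc
  have hkey : ∀ n : ℕ, c (n + 1) * ((n : ℂ) + 1) = t * c n := by
    intro n
    have h1 : ((Nat.factorial (n + 1) : ℂ)) = ((n : ℂ) + 1) * (Nat.factorial n : ℂ) := by
      rw [Nat.factorial_succ]; push_cast; ring
    have h2 : ((n : ℂ) + 1) ≠ 0 := Nat.cast_add_one_ne_zero n
    have h3 : (Nat.factorial n : ℂ) ≠ 0 := Nat.cast_ne_zero.mpr n.factorial_ne_zero
    simp only [hc, pow_succ, h1]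
    field_simp
  have hsum : Summable (fun n => c n • A ^ n) := by
    have h := NormedSpace.expSeries_summable' (𝕂 := ℂ) (t • A)
    simp only [smul_pow, smul_smul, hc] at h
    exact h
  have hE : NormedSpace.exp (t • A) = ∑' n : ℕ, c n • A ^ n := by
    rw [NormedSpace.exp_eq_tsum (𝕂 := ℂ)]
    exact tsum_congr fun n => by rw [smul_pow, smul_smul]
  have hsum1 : Summable (fun n => c (n + 1) • A ^ (n + 1)) :=
    (summable_nat_add_iff 1).mpr hsum
  set E := ∑' n : ℕ, c n • A ^ n with hEdef
  -- the key conjugation-by-series identity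
  have key : NormedSpace.exp (t • A) * B
      = (B + t • Hm - (t ^ 2) • A) * NormedSpace.exp (t • A) := by
    rw [hE]
    rw [← hsum.tsum_mul_right B]
    have e0 : ∀ n : ℕ, (c n • A ^ n) * B = c n • (A ^ n * B) :=
      fun n => smul_mul_assoc _ _ _
    rw [tsum_congr e0]
    have hf : Summable (fun n => c n • (A ^ n * B)) := by
      simpa [smul_mul_assoc] using hsum.mul_right B
    rw [hf.tsum_eq_zero_add]
    have e1 : ∀ n : ℕ, c (n + 1) • (A ^ (n + 1) * B)
        = B * (c (n + 1) • A ^ (n + 1)) + t • (Hm * (c n • A ^ n))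
          - (t * (c n * (n : ℂ))) • A ^ n := by
      intro n
      rw [hpow n]
      simp only [smul_add, smul_sub, smul_smul, mul_smul_comm]
      rw [hkey n]
      rw [show c (n + 1) * (((n : ℂ) + 1) * (n : ℂ)) = t * (c n * (n : ℂ)) by
        rw [← mul_assoc, hkey n, mul_assoc]]
    rw [tsum_congr e1]
    have hS1 : Summable (fun n => B * (c (n + 1) • A ^ (n + 1))) := hsum1.mul_left B
    have hS2 : Summable (fun n => t • (Hm * (c n • A ^ n))) :=
      (hsum.mul_left Hm).const_smul t
    have hg1 : ∀ n : ℕ, (t * (c (n + 1) * ((n + 1 : ℕ) : ℂ))) • A ^ (n + 1)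
        = t • (t • (A * (c n • A ^ n))) := by
      intro n
      simp only [smul_smul, mul_smul_comm, ← pow_succ']
      congr 1
      rw [show (((n + 1 : ℕ)) : ℂ) = (n : ℂ) + 1 by push_cast; ring, hkey n]
    have hSg : Summable (fun n => (t * (c n * (n : ℂ))) • A ^ n) := by
      apply (summable_nat_add_iff 1).mp
      have hsg : Summable (fun n => t • (t • (A * (c n • A ^ n)))) :=
        ((hsum.mul_left A).const_smul t).const_smul t
      exact hsg.congr fun n => (hg1 n).symm
    rw [Summable.tsum_sub (hS1.add hS2) hSg, Summable.tsum_add hS1 hS2]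
    rw [Summable.tsum_mul_left B hsum1, Summable.tsum_const_smul t (hsum.mul_left Hm),
      Summable.tsum_mul_left Hm hsum]
    have hTg : ∑' n, (t * (c n * (n : ℂ))) • A ^ n = t • (t • (A * E)) := by
      rw [hSg.tsum_eq_zero_add]
      have hg0 : (t * (c 0 * ((0 : ℕ) : ℂ))) • A ^ 0 = 0 := by simp
      rw [hg0, zero_add, tsum_congr hg1, Summable.tsum_const_smul t (((hsum.mul_left A)).const_smul t),
        Summable.tsum_const_smul t (hsum.mul_left A), Summable.tsum_mul_left A hsum]
    rw [hTg]
    have hshift : ∑' n, c (n + 1) • A ^ (n + 1) = E - 1 := by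
      have h0 := hsum.tsum_eq_zero_add
      have hc0 : c 0 • A ^ 0 = 1 := by simp [hc]
      rw [hc0] at h0
      rw [← hEdef] at h0
      rw [h0]
      abel
    rw [hshift]
    have hf0 : c 0 • (A ^ 0 * B) = B := by simp [hc]
    rw [hf0]
    simp only [add_mul, sub_mul, smul_mul_assoc, mul_sub, mul_one, smul_smul, pow_two]
    abel
  have hcomm : Commute (t • A) ((-t) • A) := ((Commute.refl A).smul_left t).smul_right (-t)
  have hinv : NormedSpace.exp (t • A) * NormedSpace.exp ((-t) • A) = 1 := by
    refine Eq.trans (NormedSpace.exp_add_of_commute hcomm).symm ?_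
    have hz : t • A + (-t) • A = 0 := by rw [← add_smul]; simp
    rw [hz, NormedSpace.exp_zero]
  calc NormedSpace.exp (t • A) * B * NormedSpace.exp ((-t) • A)
      = (B + t • Hm - (t ^ 2) • A) *
          (NormedSpace.exp (t • A) * NormedSpace.exp ((-t) • A)) := by
        rw [key, mul_assoc]
    _ = B + t • Hm - (t ^ 2) • A := by rw [hinv, mul_one]
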